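/- Fisher consistency of the pointwise PDI risk: with r(b) = ∫_{a_L}^{b}(1−α)h(a)da + ∫_{b}^{a_U} α(1−h(a))da where h is continuous, h(a_L) ≤ α ≤ h(a_U), and a* is the unique solution of h(a) = α in [a_L, a_U], the point a* is the unique global minimizer of r on [a_L, a_U]. -/
import Mathlib


open Set intervalIntegral

theorem pointwise_fisher_consistency (aL aU α : ℝ) (h : ℝ → ℝ) (hlt : aL < aU)
    (hα : α ∈ Ioo (0 : ℝ) 1)
    (hcont : ContinuousOn h (Icc aL aU))
    (hrange : ∀ a ∈ Icc aL aU, h a ∈ Icc (0 : ℝ) 1)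
    (hL : h aL ≤ α) (hU : α ≤ h aU)
    (astar : ℝ) (hstar : astar ∈ Icc aL aU) (heq : h astar = α)
    (huniq : ∀ a ∈ Icc aL aU, h a = α → a = astar)
    (r : ℝ → ℝ)
    (hr : ∀ b ∈ Icc aL aU,
      r b = (∫ a in aL..b, (1 - α) * h a) + ∫ a in b..aU, α * (1 - h a)) :
    (∀ b ∈ Icc aL aU, r astar ≤ r b) ∧
    (∀ b ∈ Icc aL aU, r b = r astar → b = astar) := by
  -- integrability helper
  have hint : ∀ (φ : ℝ → ℝ), ContinuousOn φ (Icc aL aU) →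
      ∀ x ∈ Icc aL aU, ∀ y ∈ Icc aL aU, IntervalIntegrable φ MeasureTheory.volume x y := by
    intro φ hφ x hx y hy
    exact (hφ.mono (uIcc_subset_Icc hx hy)).intervalIntegrable
  have hcf : ContinuousOn (fun a => (1 - α) * h a) (Icc aL aU) :=
    continuousOn_const.mul hcont
  have hcg : ContinuousOn (fun a => α * (1 - h a)) (Icc aL aU) :=
    continuousOn_const.mul (continuousOn_const.sub hcont)
  have hch : ContinuousOn (fun a => h a - α) (Icc aL aU) := hcont.sub continuousOn_const
  have hLm : aL ∈ Icc aL aU := ⟨le_refl _, le_of_lt hlt⟩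
  have hUm : aU ∈ Icc aL aU := ⟨le_of_lt hlt, le_refl _⟩
  -- difference identity
  have hdiff : ∀ b ∈ Icc aL aU, r b - r astar = ∫ a in astar..b, (h a - α) := by
    intro b hb
    have h1 : (∫ a in aL..astar, (1 - α) * h a) + ∫ a in astar..b, (1 - α) * h a
        = ∫ a in aL..b, (1 - α) * h a :=
      integral_add_adjacent_intervals (hint _ hcf aL hLm astar hstar)
        (hint _ hcf astar hstar b hb)
    have h2 : (∫ a in b..astar, α * (1 - h a)) + ∫ a in astar..aU, α * (1 - h a)
        = ∫ a in b..aU, α * (1 - h a) :=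
      integral_add_adjacent_intervals (hint _ hcg b hb astar hstar)
        (hint _ hcg astar hstar aU hUm)
    have h3 : (∫ a in b..astar, α * (1 - h a)) = -∫ a in astar..b, α * (1 - h a) :=
      integral_symm _ _
    have h4 : (∫ a in astar..b, (h a - α))
        = (∫ a in astar..b, (1 - α) * h a) - ∫ a in astar..b, α * (1 - h a) := by
      rw [← integral_sub (hint _ hcf astar hstar b hb) (hint _ hcg astar hstar b hb)]
      congr 1; funext a; ring
    rw [hr b hb, hr astar hstar, h4, ← h1, ← h2, h3]; ring
  -- sign lemmas
  have hbelow : ∀ a ∈ Icc aL aU, a < astar → h a < α := by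
    intro a ha halt
    rcases lt_trichotomy (h a) α with hc | hc | hc
    · exact hc
    · exact absurd (huniq a ha hc) (ne_of_lt halt)
    · -- IVT on [aL, a] : h aL ≤ α ≤ h a
      have hsub : Icc aL a ⊆ Icc aL aU := Icc_subset_Icc le_rfl ha.2
      have := intermediate_value_Icc ha.1 (hcont.mono hsub) ⟨hL, le_of_lt hc⟩
      obtain ⟨c, hc1, hc2⟩ := this
      have : c = astar := huniq c (hsub hc1) hc2
      exact absurd (this ▸ hc1.2) (not_le.mpr halt)
  have habove : ∀ a ∈ Icc aL aU, astar < a → α < h a := by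
    intro a ha halt
    rcases lt_trichotomy (h a) α with hc | hc | hc
    · -- IVT on [a, aU] : h a ≤ α ≤ h aU
      have hsub : Icc a aU ⊆ Icc aL aU := Icc_subset_Icc ha.1 le_rfl
      have := intermediate_value_Icc ha.2 (hcont.mono hsub) ⟨le_of_lt hc, hU⟩
      obtain ⟨c, hc1, hc2⟩ := this
      have : c = astar := huniq c (hsub hc1) hc2
      exact absurd (this ▸ hc1.1) (not_le.mpr halt)
    · exact absurd (huniq a ha hc) (ne_of_gt halt)
    · exact hc
  -- strict positivity of the difference for b ≠ astar
  have hpos : ∀ b ∈ Icc aL aU, b ≠ astar → 0 < ∫ a in astar..b, (h a - α) := by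
    intro b hb hne
    rcases lt_or_gt_of_ne hne with hblt | hbgt
    · -- b < astar : integrand negative on (b, astar)
      have key : 0 < ∫ a in b..astar, (α - h a) := by
        apply intervalIntegral_pos_of_pos_on
        · exact hint _ (continuousOn_const.sub hcont) b hb astar hstar
        · intro x hx
          have hxm : x ∈ Icc aL aU := ⟨le_trans hb.1 (le_of_lt hx.1), le_trans (le_of_lt hx.2) hstar.2⟩
          have := hbelow x hxm hx.2
          linarith
        · exact hblt
      have : (∫ a in b..astar, (α - h a)) = ∫ a in astar..b, (h a - α) := by
        rw [integral_symm]
        rw [← integral_neg]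
        congr 1; funext a; ring
      linarith [this ▸ key]
    · apply intervalIntegral_pos_of_pos_on
      · exact hint _ hch astar hstar b hb
      · intro x hx
        have hxm : x ∈ Icc aL aU := ⟨le_trans hstar.1 (le_of_lt hx.1), le_trans (le_of_lt hx.2) hb.2⟩
        have := habove x hxm hx.1
        linarith
      · exact hbgt
  constructor
  · intro b hb
    by_cases hne : b = astar
    · rw [hne]
    · have := hpos b hb hne
      have hd := hdiff b hb
      linarith
  · intro b hb hrb
    by_contra hne
    have := hpos b hb hne
    have hd := hdiff b hb
    linarith
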